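/- Let d = diag(1, p^{-1}, ..., p^{-1}) ∈ GL_n(ℚ_p). Then I d I = ⋃_{E ∈ {0,1,...,p-1}^{n-1}} x_E I, and the right cosets x_E I, for E ranging over {0,1,...,p-1}^{n-1}, are pairwise disjoint. In particular the double coset I d I (underlying the Hecke operator U_p) is the disjoint union of exactly p^{n-1} right I-cosets. -/

import Mathlib

open Pointwise

/-- The Iwahori subgroup of `GL_n(ℚ_p)`: matrices with entries in `ℤ_p`, determinant a
`p`-adic unit, and entries strictly below the diagonal in `pℤ_p`. -/
def Iwahori (p : ℕ) [Fact p.Prime] (n : ℕ) :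
    Set (Matrix.GeneralLinearGroup (Fin n) ℚ_[p]) :=
  {g | (∀ i j : Fin n, ‖(g : Matrix (Fin n) (Fin n) ℚ_[p]) i j‖ ≤ 1) ∧
    ‖(g : Matrix (Fin n) (Fin n) ℚ_[p]).det‖ = 1 ∧
    ∀ i j : Fin n, j < i → ‖(g : Matrix (Fin n) (Fin n) ℚ_[p]) i j‖ < 1}

/-- The diagonal matrix `diag(p^{a_1}, ..., p^{a_n})` as an element of `GL_n(ℚ_p)`. -/
noncomputable def dGL (p : ℕ) [Fact p.Prime] (n : ℕ) (a : Fin n → ℤ) :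
    Matrix.GeneralLinearGroup (Fin n) ℚ_[p] :=
  Matrix.GeneralLinearGroup.mkOfDetNeZero
    (Matrix.diagonal fun i => (p : ℚ_[p]) ^ (a i))
    (by
      rw [Matrix.det_diagonal]
      exact Finset.prod_ne_zero_iff.2 fun i _ =>
        zpow_ne_zero _ (Nat.cast_ne_zero.mpr (Fact.out : p.Prime).ne_zero))

/-- The matrix `x_E = [[1, p⁻¹E], [0, p⁻¹·Id]]` (here size `(n+1) × (n+1)`, with
`E ∈ ℤⁿ` filling the rest of the first row, scaled by `p⁻¹`). -/
noncomputable def xMat (p : ℕ) [Fact p.Prime] (n : ℕ) (E : Fin n → ℤ) :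
    Matrix (Fin (n + 1)) (Fin (n + 1)) ℚ_[p] :=
  Matrix.of fun i j =>
    if i = 0 then
      (if h : j = 0 then 1 else ((p : ℚ_[p]))⁻¹ * ((E (j.pred h) : ℤ) : ℚ_[p]))
    else if i = j then ((p : ℚ_[p]))⁻¹ else 0

/-- The matrix `x_E` as an element of `GL_{n+1}(ℚ_p)`. -/
noncomputable def xGL (p : ℕ) [Fact p.Prime] (n : ℕ) (E : Fin n → ℤ) :
    Matrix.GeneralLinearGroup (Fin (n + 1)) ℚ_[p] :=
  Matrix.GeneralLinearGroup.mkOfDetNeZero (xMat p n E)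
    (by
      have hp : (p : ℚ_[p]) ≠ 0 := Nat.cast_ne_zero.mpr (Fact.out : p.Prime).ne_zero
      have htri : (xMat p n E).BlockTriangular id := by
        intro i j hij
        have hi : i ≠ 0 := by
          rintro rfl
          exact absurd hij (by simp)
        have hij' : ¬ i = j := fun h => hij.ne h.symm
        simp only [xMat, Matrix.of_apply, if_neg hi, if_neg hij']
      rw [Matrix.det_of_upperTriangular htri]
      refine Finset.prod_ne_zero_iff.2 fun i _ => ?_
      by_cases hi : i = 0
      · subst hi; simp [xMat]
      · simp only [xMat, Matrix.of_apply, if_neg hi, if_pos rfl]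
        exact inv_ne_zero hp)

section Gen
variable {K : Type*} [CommRing K] {n : ℕ}

/-- matrix [[1, c],[0, t Id]] -/
def gen (c : Fin n → K) (t : K) : Matrix (Fin (n + 1)) (Fin (n + 1)) K :=
  Matrix.of fun i j =>
    if i = 0 then (if h : j = 0 then 1 else c (j.pred h)) else if i = j then t else 0

@[simp] lemma gen_zero_zero (c : Fin n → K) (t : K) : gen c t 0 0 = 1 := rfl

@[simp] lemma gen_zero_succ (c : Fin n → K) (t : K) (j : Fin n) :
    gen c t 0 j.succ = c j := by
  simp [gen, Fin.succ_ne_zero]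

@[simp] lemma gen_succ (c : Fin n → K) (t : K) (i : Fin n) (j : Fin (n + 1)) :
    gen c t i.succ j = if i.succ = j then t else 0 := by
  simp [gen, Fin.succ_ne_zero]

lemma gen_congr {c c' : Fin n → K} {t t' : K} (hc : ∀ j, c j = c' j) (ht : t = t') :
    gen c t = gen c' t' := by
  cases funext hc; cases ht; rfl

lemma gen_mul_left (c : Fin n → K) (t : K) (A : Matrix (Fin (n + 1)) (Fin (n + 1)) K) :
    gen c t * A = Matrix.of fun i j =>
      if i = 0 then A 0 j + ∑ k : Fin n, c k * A k.succ j else t * A i j := by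
  ext i j
  rcases Fin.eq_zero_or_eq_succ i with rfl | ⟨i', rfl⟩
  · simp [Matrix.mul_apply, Fin.sum_univ_succ]
  · simp [Matrix.mul_apply, Fin.succ_ne_zero, ite_mul]

lemma gen_mul_right (c : Fin n → K) (t : K) (A : Matrix (Fin (n + 1)) (Fin (n + 1)) K) :
    A * gen c t = Matrix.of fun i j =>
      if h : j = 0 then A i 0 else A i 0 * c (j.pred h) + A i j * t := by
  ext i j
  rcases Fin.eq_zero_or_eq_succ j with rfl | ⟨j', rfl⟩
  · simp [Matrix.mul_apply, Fin.sum_univ_succ, gen, Fin.succ_ne_zero]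
  · simp [Matrix.mul_apply, Fin.sum_univ_succ, Fin.succ_ne_zero, mul_ite, Fin.succ_inj]

lemma gen_mul_gen (c c' : Fin n → K) (t t' : K) :
    gen c t * gen c' t' = gen (fun j => c' j + c j * t') (t * t') := by
  rw [gen_mul_left]
  ext i j
  rcases Fin.eq_zero_or_eq_succ i with rfl | ⟨i', rfl⟩
  · rcases Fin.eq_zero_or_eq_succ j with rfl | ⟨j', rfl⟩
    · simp [Fin.succ_ne_zero]
    · simp [mul_ite, Fin.succ_inj]
  · simp [Fin.succ_ne_zero, ite_mul, mul_comm]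

lemma gen_zero_one : gen (fun _ => (0 : K)) 1 = (1 : Matrix (Fin (n + 1)) (Fin (n + 1)) K) := by
  ext i j
  rcases Fin.eq_zero_or_eq_succ i with rfl | ⟨i', rfl⟩
  · rcases Fin.eq_zero_or_eq_succ j with rfl | ⟨j', rfl⟩
    · simp [Matrix.one_apply]
    · simp [Matrix.one_apply, (Fin.succ_ne_zero j').symm]
  · simp [Matrix.one_apply]

lemma gen_blockTriangular (c : Fin n → K) (t : K) : (gen c t).BlockTriangular id := by
  intro i j hij
  rcases Fin.eq_zero_or_eq_succ i with rfl | ⟨i', rfl⟩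
  · exact absurd hij (by simp [Fin.le_def])
  · have : ¬ i'.succ = j := fun h => absurd hij (by simp [h])
    simp [this]

lemma gen_det (c : Fin n → K) (t : K) : (gen c t).det = t ^ n := by
  rw [Matrix.det_of_upperTriangular (gen_blockTriangular c t), Fin.prod_univ_succ]
  simp

end Gen

section Aux
variable {p : ℕ} [Fact p.Prime] {n : ℕ}

lemma coe_norm_lt_one_iff (x : ℤ_[p]) : ‖(x : ℚ_[p])‖ < 1 ↔ PadicInt.toZMod x = 0 := by
  rw [← PadicInt.norm_def, PadicInt.norm_lt_one_iff_dvd, ← Ideal.mem_span_singleton,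
    ← PadicInt.maximalIdeal_eq_span_p, ← PadicInt.ker_toZMod, RingHom.mem_ker]

lemma map_nonsing_inv {R S : Type*} [CommRing R] [CommRing S] {m : ℕ} (f : R →+* S)
    (A : Matrix (Fin m) (Fin m) R) (h : IsUnit A.det) : (A⁻¹).map f = (A.map f)⁻¹ := by
  symm
  apply Matrix.inv_eq_right_inv
  rw [← Matrix.map_mul, Matrix.mul_nonsing_inv _ h, Matrix.map_one f f.map_zero f.map_one]

def intEntry (x : ℚ_[p]) (h : ‖x‖ ≤ 1) : ℤ_[p] := ⟨x, h⟩

@[simp] lemma coe_intEntry (x : ℚ_[p]) (h : ‖x‖ ≤ 1) :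
    ((intEntry x h : ℤ_[p]) : ℚ_[p]) = x := rfl

lemma coe_ringHom_apply (x : ℤ_[p]) : (PadicInt.Coe.ringHom : ℤ_[p] →+* ℚ_[p]) x = ↑x := rfl

lemma det_map_coe {m : ℕ} (A : Matrix (Fin m) (Fin m) ℤ_[p]) :
    (A.map (PadicInt.Coe.ringHom : ℤ_[p] →+* ℚ_[p])).det = ((A.det : ℤ_[p]) : ℚ_[p]) := by
  rw [← coe_ringHom_apply, RingHom.map_det, RingHom.mapMatrix_apply]

lemma mem_Iwahori_iff {m : ℕ} (g : Matrix.GeneralLinearGroup (Fin m) ℚ_[p]) :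
    g ∈ Iwahori p m ↔ ∃ A : Matrix (Fin m) (Fin m) ℤ_[p],
      A.map (PadicInt.Coe.ringHom : ℤ_[p] →+* ℚ_[p]) = (g : Matrix (Fin m) (Fin m) ℚ_[p]) ∧
      IsUnit A.det ∧ (A.map (PadicInt.toZMod : ℤ_[p] →+* ZMod p)).BlockTriangular id := by
  constructor
  · rintro ⟨h1, h2, h3⟩
    refine ⟨Matrix.of fun i j => intEntry ((g : Matrix (Fin m) (Fin m) ℚ_[p]) i j) (h1 i j), ?_, ?_, ?_⟩
    · ext i j; rfl
    · rw [PadicInt.isUnit_iff, PadicInt.norm_def]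
      have : (((Matrix.of fun i j => intEntry ((g : Matrix (Fin m) (Fin m) ℚ_[p]) i j) (h1 i j)).det : ℤ_[p]) : ℚ_[p])
          = (g : Matrix (Fin m) (Fin m) ℚ_[p]).det := by
        rw [← det_map_coe]; rfl
      rw [this]; exact h2
    · intro i j hij
      have := h3 i j hij
      rw [show (g : Matrix (Fin m) (Fin m) ℚ_[p]) i j =
        ((intEntry ((g : Matrix (Fin m) (Fin m) ℚ_[p]) i j) (h1 i j) : ℤ_[p]) : ℚ_[p]) from rfl,
        coe_norm_lt_one_iff] at this
      simpa [Matrix.map_apply] using this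
  · rintro ⟨A, hA, hdet, htri⟩
    refine ⟨fun i j => ?_, ?_, fun i j hij => ?_⟩
    · rw [← hA]
      rw [Matrix.map_apply]; exact PadicInt.norm_le_one (A i j)
    · rw [← hA, det_map_coe, ← PadicInt.norm_def]
      exact PadicInt.isUnit_iff.1 hdet
    · have h0 := htri (show (id j : Fin m) < id i from hij)
      rw [Matrix.map_apply] at h0
      rw [← hA, Matrix.map_apply]
      exact (coe_norm_lt_one_iff _).2 h0

lemma Iwahori.mul_mem {m : ℕ} {g h : Matrix.GeneralLinearGroup (Fin m) ℚ_[p]}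
    (hg : g ∈ Iwahori p m) (hh : h ∈ Iwahori p m) : g * h ∈ Iwahori p m := by
  rw [mem_Iwahori_iff] at hg hh ⊢
  obtain ⟨A, hA, hAd, hAt⟩ := hg
  obtain ⟨B, hB, hBd, hBt⟩ := hh
  refine ⟨A * B, ?_, ?_, ?_⟩
  · rw [Matrix.map_mul, hA, hB, Units.val_mul]
  · rw [Matrix.det_mul]; exact hAd.mul hBd
  · rw [Matrix.map_mul]; exact hAt.mul hBt

lemma Iwahori.inv_mem {m : ℕ} {g : Matrix.GeneralLinearGroup (Fin m) ℚ_[p]}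
    (hg : g ∈ Iwahori p m) : g⁻¹ ∈ Iwahori p m := by
  rw [mem_Iwahori_iff] at hg ⊢
  obtain ⟨A, hA, hAd, hAt⟩ := hg
  refine ⟨A⁻¹, ?_, ?_, ?_⟩
  · rw [map_nonsing_inv _ _ hAd, hA, ← Matrix.coe_units_inv]
  · have h1 : A⁻¹.det * A.det = 1 := by
      rw [← Matrix.det_mul, Matrix.nonsing_inv_mul _ hAd, Matrix.det_one]
    exact IsUnit.of_mul_eq_one _ h1
  · rw [map_nonsing_inv _ _ hAd]
    have hdet : (A.map (PadicInt.toZMod : ℤ_[p] →+* ZMod p)).det ≠ 0 := by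
      rw [← RingHom.mapMatrix_apply, ← RingHom.map_det]
      exact (hAd.map _).ne_zero
    haveI := Matrix.invertibleOfIsUnitDet _ (isUnit_iff_ne_zero.2 hdet)
    exact Matrix.blockTriangular_inv_of_blockTriangular hAt

lemma hp_ne (p : ℕ) [Fact p.Prime] : (p : ℚ_[p]) ≠ 0 :=
  Nat.cast_ne_zero.mpr (Fact.out : p.Prime).ne_zero

lemma xGL_coe (E : Fin n → ℤ) :
    ((xGL p n E : Matrix.GeneralLinearGroup (Fin (n + 1)) ℚ_[p]) :
      Matrix (Fin (n + 1)) (Fin (n + 1)) ℚ_[p])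
    = gen (fun j => (p : ℚ_[p])⁻¹ * ((E j : ℤ) : ℚ_[p])) (p : ℚ_[p])⁻¹ := rfl

lemma dGL_coe :
    ((dGL p (n + 1) (fun i => if i = 0 then 0 else -1) :
        Matrix.GeneralLinearGroup (Fin (n + 1)) ℚ_[p]) :
      Matrix (Fin (n + 1)) (Fin (n + 1)) ℚ_[p])
    = gen (fun _ => (0 : ℚ_[p])) (p : ℚ_[p])⁻¹ := by
  show Matrix.diagonal (fun i : Fin (n+1) => (p : ℚ_[p]) ^ (if i = 0 then (0:ℤ) else -1)) = _
  ext i j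
  rcases Fin.eq_zero_or_eq_succ i with rfl | ⟨i', rfl⟩
  · rcases Fin.eq_zero_or_eq_succ j with rfl | ⟨j', rfl⟩
    · simp
    · simp [Matrix.diagonal_apply, (Fin.succ_ne_zero j').symm]
  · simp [Matrix.diagonal_apply, Fin.succ_ne_zero, zpow_neg_one, eq_comm]

lemma xMat_mul_xinv (E : Fin n → ℤ) :
    gen (fun j => (p : ℚ_[p])⁻¹ * ((E j : ℤ) : ℚ_[p])) (p : ℚ_[p])⁻¹ *
      gen (fun j => -((E j : ℤ) : ℚ_[p])) (p : ℚ_[p]) = 1 := by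
  rw [gen_mul_gen, ← gen_zero_one]
  refine gen_congr (fun j => ?_) ?_
  · field_simp
    simp [hp_ne p]
  · exact inv_mul_cancel₀ (hp_ne p)

lemma xGL_inv_coe (E : Fin n → ℤ) :
    (((xGL p n E)⁻¹ : Matrix.GeneralLinearGroup (Fin (n + 1)) ℚ_[p]) :
      Matrix (Fin (n + 1)) (Fin (n + 1)) ℚ_[p])
    = gen (fun j => -((E j : ℤ) : ℚ_[p])) (p : ℚ_[p]) := by
  rw [Matrix.coe_units_inv]
  apply Matrix.inv_eq_right_inv
  rw [xGL_coe, xMat_mul_xinv]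

end Aux
section Aux2
variable {p : ℕ} [Fact p.Prime] {n : ℕ}

/-- The unipotent matrix `[[1, E],[0, Id]]` as an element of `GL_{n+1}`. -/
noncomputable def uGL (p : ℕ) [Fact p.Prime] (n : ℕ) (E : Fin n → ℤ) :
    Matrix.GeneralLinearGroup (Fin (n + 1)) ℚ_[p] :=
  Matrix.GeneralLinearGroup.mkOfDetNeZero (gen (fun j => ((E j : ℤ) : ℚ_[p])) 1)
    (by rw [gen_det, one_pow]; exact one_ne_zero)

lemma uGL_coe (E : Fin n → ℤ) :
    ((uGL p n E : Matrix.GeneralLinearGroup (Fin (n + 1)) ℚ_[p]) :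
      Matrix (Fin (n + 1)) (Fin (n + 1)) ℚ_[p])
    = gen (fun j => ((E j : ℤ) : ℚ_[p])) 1 := rfl

lemma uGL_mem (E : Fin n → ℤ) : uGL p n E ∈ Iwahori p (n + 1) := by
  refine ⟨fun i j => ?_, ?_, fun i j hij => ?_⟩
  · rw [uGL_coe]
    rcases Fin.eq_zero_or_eq_succ i with rfl | ⟨i', rfl⟩
    · rcases Fin.eq_zero_or_eq_succ j with rfl | ⟨j', rfl⟩
      · simp
      · simpa using Padic.norm_int_le_one (E j')
    · rw [gen_succ]
      split <;> simp
  · rw [uGL_coe, gen_det, one_pow, norm_one]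
  · rw [uGL_coe, gen_blockTriangular _ _ (show (id j : Fin (n+1)) < id i from hij)]
    simp

lemma xGL_eq_uGL_mul_dGL (E : Fin n → ℤ) :
    xGL p n E = uGL p n E * dGL p (n + 1) (fun i => if i = 0 then 0 else -1) := by
  apply Units.ext
  rw [Units.val_mul, uGL_coe, dGL_coe, xGL_coe, gen_mul_gen]
  exact gen_congr (fun j => by ring) (by ring)

@[simp, norm_cast] lemma padic_coe_sum {ι : Type*} (s : Finset ι) (f : ι → ℤ_[p]) :
    ((∑ i ∈ s, f i : ℤ_[p]) : ℚ_[p]) = ∑ i ∈ s, ((f i : ℤ_[p]) : ℚ_[p]) :=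
  map_sum (PadicInt.Coe.ringHom : ℤ_[p] →+* ℚ_[p]) f s

lemma key (a : Matrix.GeneralLinearGroup (Fin (n + 1)) ℚ_[p]) (ha : a ∈ Iwahori p (n + 1)) :
    ∃ E : Fin n → ℤ, (∀ j, 0 ≤ E j ∧ E j < p) ∧
      (xGL p n E)⁻¹ * (a * dGL p (n + 1) (fun i => if i = 0 then 0 else -1)) ∈
        Iwahori p (n + 1) := by
  haveI : NeZero p := ⟨(Fact.out : p.Prime).ne_zero⟩
  have hp : (p : ℚ_[p]) ≠ 0 := hp_ne p
  obtain ⟨A, hA, hAdet, hAtri⟩ := (mem_Iwahori_iff a).1 ha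
  have hdet1 : ‖(a : Matrix (Fin (n+1)) (Fin (n+1)) ℚ_[p]).det‖ = 1 := ha.2.1
  set G : Matrix (Fin (n+1)) (Fin (n+1)) ℚ_[p] := (a : Matrix (Fin (n+1)) (Fin (n+1)) ℚ_[p])
    with hG
  have hGA : ∀ i j, G i j = ((A i j : ℤ_[p]) : ℚ_[p]) := by
    intro i j; rw [← hA]; rfl
  set Ab := A.map (PadicInt.toZMod : ℤ_[p] →+* ZMod p) with hAb
  set B : Matrix (Fin n) (Fin n) (ZMod p) := Matrix.of fun k j => Ab k.succ j.succ with hB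
  set w : Fin n → ZMod p := fun j => Ab 0 j.succ with hw
  have hBtri : B.BlockTriangular id := fun k j hkj =>
    hAtri (show (id (j.succ) : Fin (n+1)) < id (k.succ) from Fin.succ_lt_succ_iff.2 hkj)
  have hAbdet : Ab.det ≠ 0 := by
    rw [hAb, ← RingHom.mapMatrix_apply, ← RingHom.map_det]
    exact (hAdet.map _).ne_zero
  have hBdet : B.det ≠ 0 := by
    have h1 : Ab.det = Ab 0 0 * ∏ k : Fin n, Ab k.succ k.succ := by
      rw [Matrix.det_of_upperTriangular hAtri, Fin.prod_univ_succ]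
    have h2 : B.det = ∏ k : Fin n, Ab k.succ k.succ :=
      Matrix.det_of_upperTriangular hBtri
    rw [h2]
    rw [h1] at hAbdet
    exact fun h => hAbdet (by rw [h, mul_zero])
  set v : Fin n → ZMod p := Matrix.vecMul w B⁻¹ with hv
  have hvB : Matrix.vecMul v B = w := by
    rw [hv, Matrix.vecMul_vecMul, Matrix.nonsing_inv_mul B (isUnit_iff_ne_zero.2 hBdet),
      Matrix.vecMul_one]
  set E : Fin n → ℤ := fun j => ((v j).val : ℤ) with hE
  have hEv : ∀ k, ((E k : ℤ) : ZMod p) = v k := by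
    intro k
    rw [hE]
    push_cast
    rw [ZMod.natCast_val, ZMod.cast_id]
  have hdvd : ∀ j : Fin n,
      (p : ℤ_[p]) ∣ (A 0 j.succ - ∑ k : Fin n, ((E k : ℤ) : ℤ_[p]) * A k.succ j.succ) := by
    intro j
    rw [← PadicInt.norm_lt_one_iff_dvd, PadicInt.norm_def, coe_norm_lt_one_iff]
    have hcalc : (PadicInt.toZMod : ℤ_[p] →+* ZMod p)
        (A 0 j.succ - ∑ k : Fin n, ((E k : ℤ) : ℤ_[p]) * A k.succ j.succ)
        = w j - ∑ k : Fin n, v k * B k j := by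
      rw [map_sub, map_sum]
      congr 1
      refine Finset.sum_congr rfl fun k _ => ?_
      rw [map_mul, map_intCast, hEv]
      rfl
    rw [hcalc]
    have : ∑ k : Fin n, v k * B k j = Matrix.vecMul v B j := by
      simp [Matrix.vecMul, dotProduct]
    rw [this, hvB, sub_self]
  refine ⟨E, fun j => ⟨Int.natCast_nonneg _,
    by simp only [hE]; exact_mod_cast ZMod.val_lt (v j)⟩, ?_⟩
  set c : Fin n → ℤ_[p] := fun j => (hdvd j).choose with hc
  have hcspec : ∀ j : Fin n,
      A 0 j.succ - ∑ k : Fin n, ((E k : ℤ) : ℤ_[p]) * A k.succ j.succ = p * c j :=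
    fun j => (hdvd j).choose_spec
  set N : Matrix (Fin (n+1)) (Fin (n+1)) ℤ_[p] := Matrix.of fun i j =>
    if i = 0 then
      (if h : j = 0 then A 0 0 - ∑ k : Fin n, ((E k : ℤ) : ℤ_[p]) * A k.succ 0
        else c (j.pred h))
    else if j = 0 then p * A i 0 else A i j with hN
  have hNmap : N.map (PadicInt.Coe.ringHom : ℤ_[p] →+* ℚ_[p]) =
      (((xGL p n E)⁻¹ * (a * dGL p (n + 1) fun i => if i = 0 then 0 else -1) :
        Matrix.GeneralLinearGroup (Fin (n+1)) ℚ_[p]) :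
          Matrix (Fin (n+1)) (Fin (n+1)) ℚ_[p]) := by
    rw [Units.val_mul, Units.val_mul, xGL_inv_coe, dGL_coe, ← hG, gen_mul_right, gen_mul_left]
    ext i j
    rw [Matrix.map_apply, coe_ringHom_apply]
    rcases Fin.eq_zero_or_eq_succ i with rfl | ⟨i', rfl⟩ <;>
      rcases Fin.eq_zero_or_eq_succ j with rfl | ⟨j', rfl⟩
    · -- entry (0,0)
      simp only [hN, Matrix.of_apply, Fin.succ_ne_zero, if_true, eq_self_iff_true,
        dif_pos rfl, dite_eq_ite, ite_true, ite_false, dite_true, dite_false]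
      push_cast
      simp only [hGA, neg_mul, Finset.sum_neg_distrib]
      ring
    · -- entry (0, succ)
      simp only [hN, Matrix.of_apply, Fin.succ_ne_zero, if_true, eq_self_iff_true,
        dif_neg (Fin.succ_ne_zero j'), Fin.pred_succ, dite_eq_ite, ite_true, ite_false,
        dite_true, dite_false, mul_zero, zero_add]
      have hrc : ((A 0 j'.succ : ℤ_[p]) : ℚ_[p]) -
          ∑ k : Fin n, ((E k : ℤ) : ℚ_[p]) * ((A k.succ j'.succ : ℤ_[p]) : ℚ_[p])
          = (p : ℚ_[p]) * ((c j' : ℤ_[p]) : ℚ_[p]) := by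
        exact_mod_cast congrArg (fun x : ℤ_[p] => (x : ℚ_[p])) (hcspec j')
      have hsum : ∑ x : Fin n, -((E x : ℤ) : ℚ_[p]) * (G x.succ j'.succ * (p : ℚ_[p])⁻¹)
          = (∑ x : Fin n, -((E x : ℤ) : ℚ_[p]) * G x.succ j'.succ) * (p : ℚ_[p])⁻¹ := by
        rw [Finset.sum_mul]
        exact Finset.sum_congr rfl fun k _ => (mul_assoc _ _ _).symm
      rw [hsum, ← add_mul]
      have hlin : G 0 j'.succ + ∑ x : Fin n, -((E x : ℤ) : ℚ_[p]) * G x.succ j'.succ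
          = (p : ℚ_[p]) * ((c j' : ℤ_[p]) : ℚ_[p]) := by
        rw [← hrc]
        simp only [hGA, neg_mul, Finset.sum_neg_distrib, sub_eq_add_neg]
      rw [hlin, mul_comm (p : ℚ_[p]), mul_inv_cancel_right₀ hp]
    · -- entry (succ, 0)
      simp only [hN, Matrix.of_apply, Fin.succ_ne_zero, if_false, if_true, eq_self_iff_true,
        dif_pos rfl, if_neg (Fin.succ_ne_zero i'), ite_true, ite_false, dite_true, dite_false]
      push_cast
      rw [hGA]
    · -- entry (succ, succ)
      simp only [hN, Matrix.of_apply, Fin.succ_ne_zero, if_false,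
        dif_neg (Fin.succ_ne_zero j'), if_neg (Fin.succ_ne_zero i'),
        if_neg (Fin.succ_ne_zero j'), Fin.pred_succ, ite_true, ite_false, dite_true,
        dite_false, mul_zero, zero_add]
      rw [hGA, mul_comm (((A i'.succ j'.succ : ℤ_[p]) : ℚ_[p])), ← mul_assoc,
        mul_inv_cancel₀ hp, one_mul]
  rw [mem_Iwahori_iff]
  refine ⟨N, hNmap, ?_, ?_⟩
  · rw [PadicInt.isUnit_iff]
    have h2 : ((N.det : ℤ_[p]) : ℚ_[p]) =
        (N.map (PadicInt.Coe.ringHom : ℤ_[p] →+* ℚ_[p])).det := (det_map_coe N).symm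
    rw [PadicInt.norm_def, h2, hNmap, Units.val_mul, Units.val_mul, xGL_inv_coe, dGL_coe,
      Matrix.det_mul, Matrix.det_mul, gen_det, gen_det, ← hG]
    have : (p : ℚ_[p]) ^ n * (G.det * ((p : ℚ_[p])⁻¹) ^ n) = G.det := by
      field_simp
      rw [one_div, inv_pow, mul_right_comm, mul_inv_cancel₀ (pow_ne_zero _ hp), one_mul]
    rw [this, hdet1]
  · intro i j hij
    have hij' : (j : Fin (n+1)) < i := hij
    rcases Fin.eq_zero_or_eq_succ i with rfl | ⟨i', rfl⟩
    · exact absurd hij' (by simp [Fin.le_def, Fin.lt_def])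
    rcases Fin.eq_zero_or_eq_succ j with rfl | ⟨j', rfl⟩
    · simp [hN, Fin.succ_ne_zero, ZMod.natCast_self]
    · simp only [Matrix.map_apply, hN, Matrix.of_apply, if_neg (Fin.succ_ne_zero i'),
        if_neg (Fin.succ_ne_zero j')]
      exact hAtri (show (id (j'.succ) : Fin (n+1)) < id (i'.succ) from hij')

end Aux2
/-- For `d = diag(1, p⁻¹, ..., p⁻¹) ∈ GL_{n+1}(ℚ_p)` (with `n ≥ 1`),
the Iwahori double coset `I d I` (underlying the Hecke operator `U_p`) is the union of
the right cosets `x_E I` for `E` ranging over `{0, 1, ..., p-1}ⁿ`, and these right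
cosets are pairwise disjoint; in particular `I d I` is the disjoint union of exactly
`pⁿ` right `I`-cosets. -/
theorem Up_coset_decomposition (p : ℕ) [Fact p.Prime] (n : ℕ) (hn : 1 ≤ n) :
    (Iwahori p (n + 1) * {dGL p (n + 1) (fun i => if i = 0 then 0 else -1)} *
          Iwahori p (n + 1)
        = ⋃ E ∈ {E : Fin n → ℤ | ∀ j, 0 ≤ E j ∧ E j < p},
            {xGL p n E} * Iwahori p (n + 1)) ∧
    ∀ E E' : Fin n → ℤ, (∀ j, 0 ≤ E j ∧ E j < p) → (∀ j, 0 ≤ E' j ∧ E' j < p) →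
      E ≠ E' →
        Disjoint ({xGL p n E} * Iwahori p (n + 1))
          ({xGL p n E'} * Iwahori p (n + 1)) := by
  constructor
  · ext z
    constructor
    · intro hz
      rw [Set.mem_mul] at hz
      obtain ⟨u, hu, b, hb, rfl⟩ := hz
      rw [Set.mem_mul] at hu
      obtain ⟨a, ha, d0, hd0, rfl⟩ := hu
      rw [Set.mem_singleton_iff] at hd0
      subst hd0
      obtain ⟨E, hEbox, hmem⟩ := key a ha
      refine Set.mem_biUnion hEbox ?_
      have heq : xGL p n E *
          (((xGL p n E)⁻¹ * (a * dGL p (n + 1) fun i => if i = 0 then 0 else -1)) * b)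
          = a * dGL p (n + 1) (fun i => if i = 0 then 0 else -1) * b := by
        rw [← mul_assoc, mul_inv_cancel_left]
      exact heq ▸ Set.mul_mem_mul (Set.mem_singleton _) (Iwahori.mul_mem hmem hb)
    · intro hz
      simp only [Set.mem_iUnion] at hz
      obtain ⟨E, hE, hzE⟩ := hz
      rw [Set.mem_mul] at hzE
      obtain ⟨x, hx, h, hh, rfl⟩ := hzE
      rw [Set.mem_singleton_iff] at hx
      subst hx
      rw [xGL_eq_uGL_mul_dGL]
      exact Set.mul_mem_mul (Set.mul_mem_mul (uGL_mem E) (Set.mem_singleton _)) hh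
  · intro E E' hE hE' hne
    rw [Set.disjoint_left]
    rintro z hz hz'
    rw [Set.mem_mul] at hz hz'
    obtain ⟨x, hx, h, hh, rfl⟩ := hz
    obtain ⟨x', hx', h', hh', hzz⟩ := hz'
    rw [Set.mem_singleton_iff] at hx hx'
    subst hx; subst hx'
    have hq : (xGL p n E')⁻¹ * xGL p n E = h' * h⁻¹ := by
      calc (xGL p n E')⁻¹ * xGL p n E
          = (xGL p n E')⁻¹ * (xGL p n E * h) * h⁻¹ := by group
        _ = (xGL p n E')⁻¹ * (xGL p n E' * h') * h⁻¹ := by rw [hzz]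
        _ = h' * h⁻¹ := by group
    have hmemq : (xGL p n E')⁻¹ * xGL p n E ∈ Iwahori p (n + 1) := by
      rw [hq]; exact Iwahori.mul_mem hh' (Iwahori.inv_mem hh)
    have hcoe : (((xGL p n E')⁻¹ * xGL p n E :
          Matrix.GeneralLinearGroup (Fin (n + 1)) ℚ_[p]) :
            Matrix (Fin (n + 1)) (Fin (n + 1)) ℚ_[p])
        = gen (fun j => (p : ℚ_[p])⁻¹ * ((E j : ℤ) : ℚ_[p]) +
            -((E' j : ℤ) : ℚ_[p]) * (p : ℚ_[p])⁻¹) ((p : ℚ_[p]) * (p : ℚ_[p])⁻¹) := by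
      rw [Units.val_mul, xGL_inv_coe, xGL_coe, gen_mul_gen]
    apply hne
    funext j
    have hb1 := hmemq.1 0 j.succ
    rw [hcoe, gen_zero_succ] at hb1
    have hrw : (p : ℚ_[p])⁻¹ * ((E j : ℤ) : ℚ_[p]) + -((E' j : ℤ) : ℚ_[p]) * (p : ℚ_[p])⁻¹
        = ((E j - E' j : ℤ) : ℚ_[p]) * (p : ℚ_[p])⁻¹ := by
      push_cast; ring
    rw [hrw] at hb1
    have hnorm : ‖((E j - E' j : ℤ) : ℚ_[p]) * (p : ℚ_[p])⁻¹‖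
        = ‖((E j - E' j : ℤ) : ℚ_[p])‖ * (p : ℝ) := by
      rw [norm_mul, norm_inv, Padic.norm_p, inv_inv]
    rw [hnorm] at hb1
    have hppos : (1 : ℝ) < p := by exact_mod_cast (Fact.out : p.Prime).one_lt
    have hnp : ‖((E j - E' j : ℤ) : ℚ_[p])‖ < 1 := by
      nlinarith [norm_nonneg ((E j - E' j : ℤ) : ℚ_[p])]
    have hdvd : (p : ℤ) ∣ E j - E' j := (Padic.norm_intCast_lt_one_iff).1 hnp
    have h1 := hE j
    have h2 := hE' j
    have hzero : E j - E' j = 0 := by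
      by_contra h0
      have habs : (p : ℤ) ≤ |E j - E' j| :=
        Int.le_of_dvd (abs_pos.2 h0) ((dvd_abs _ _).2 hdvd)
      have hlt : |E j - E' j| < (p : ℤ) := abs_lt.2 ⟨by omega, by omega⟩
      omega
    omega
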